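/- Let k_1, k_2, n ≥ 0, 0 ≤ m_1 ≤ nk_1/2, 0 ≤ m_2 ≤ nk_2/2, and suppose dim S_n(k_1,m_1) = t_1 ≥ 1 and dim S_n(k_2,m_2) = t_2 ≥ 1, where S_n(k,m) is the space of semi-invariants of a binary n-form of degree k and weight m. Then dim S_n(k_1+k_2, m_1+m_2) ≥ t_1 + t_2 − 1. -/

import Mathlib

open MvPolynomial

/-- Cayley's operator `D = Σ_{i=1}^n i a_{i-1} ∂/∂a_i` as a linear map. -/
noncomputable def Dlin (n : ℕ) :
    MvPolynomial (Fin (n + 1)) ℚ →ₗ[ℚ] MvPolynomial (Fin (n + 1)) ℚ :=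
  ∑ i : Fin (n + 1), (i.val : ℚ) •
    ((LinearMap.mulLeft ℚ
        (X (⟨i.val - 1, lt_of_le_of_lt (Nat.sub_le _ _) i.isLt⟩ : Fin (n + 1)))).comp
      (pderiv i).toLinearMap)

/-- The space `S_n(k,m)` of semi-invariants of a binary `n`-form of degree `k`
and weight `m`: polynomials in `a_0, …, a_n` homogeneous of degree `k`,
isobaric of weight `m`, and annihilated by `D`. -/
noncomputable def S (n k m : ℕ) : Submodule ℚ (MvPolynomial (Fin (n + 1)) ℚ) :=
  homogeneousSubmodule (Fin (n + 1)) ℚ k ⊓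
    weightedHomogeneousSubmodule ℚ (fun i : Fin (n + 1) => (i.val : ℕ)) m ⊓
    LinearMap.ker (Dlin n)

namespace SemiInvProof

open scoped MonomialOrder

variable {σ : Type*} (m : MonomialOrder σ)

noncomputable def mdeg (p : MvPolynomial σ ℚ) : m.syn :=
  p.support.sup m.toSyn

lemma le_mdeg {p : MvPolynomial σ ℚ} {d : σ →₀ ℕ} (hd : coeff d p ≠ 0) :
    m.toSyn d ≤ mdeg m p :=
  Finset.le_sup (mem_support_iff.mpr hd)

lemma coeff_eq_zero_of_mdeg_lt {p : MvPolynomial σ ℚ} {d : σ →₀ ℕ}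
    (h : mdeg m p < m.toSyn d) : coeff d p = 0 := by
  by_contra h'
  exact absurd (le_mdeg m h') (not_le.mpr h)

lemma coeff_mdeg_ne_zero {p : MvPolynomial σ ℚ} (hp : p ≠ 0) :
    coeff (m.toSyn.symm (mdeg m p)) p ≠ 0 := by
  obtain ⟨d, hd, hsup⟩ := Finset.exists_mem_eq_sup p.support
    (support_nonempty.mpr hp) m.toSyn
  have h : m.toSyn.symm (mdeg m p) = d := by
    rw [mdeg, hsup]; exact m.toSyn.symm_apply_apply d
  rw [h]; exact mem_support_iff.mp hd

lemma mdeg_mul [DecidableEq σ] {p q : MvPolynomial σ ℚ} (hp : p ≠ 0) (hq : q ≠ 0) :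
    mdeg m (p * q) = mdeg m p + mdeg m q := by
  obtain ⟨dp, hdp, hsupp⟩ := Finset.exists_mem_eq_sup p.support
    (support_nonempty.mpr hp) m.toSyn
  obtain ⟨dq, hdq, hsupq⟩ := Finset.exists_mem_eq_sup q.support
    (support_nonempty.mpr hq) m.toSyn
  simp only [mdeg]
  rw [hsupp, hsupq]
  apply le_antisymm
  · apply Finset.sup_le
    intro d hd
    obtain ⟨a, ha, b, hb, rfl⟩ := Finset.mem_add.mp (support_mul p q hd)
    rw [map_add]
    exact add_le_add (le_trans (Finset.le_sup ha) (le_of_eq hsupp))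
      (le_trans (Finset.le_sup hb) (le_of_eq hsupq))
  · have key : coeff (dp + dq) (p * q) = coeff dp p * coeff dq q := by
      rw [coeff_mul]
      refine Finset.sum_eq_single_of_mem (f := fun x => coeff x.1 p * coeff x.2 q)
        (dp, dq) (Finset.HasAntidiagonal.mem_antidiagonal.mpr rfl) ?_
      rintro ⟨a, b⟩ hab hne
      rw [Finset.HasAntidiagonal.mem_antidiagonal] at hab
      by_contra hne0
      have ha : a ∈ p.support := mem_support_iff.mpr (fun h => hne0 (by simp [h]))
      have hb : b ∈ q.support := mem_support_iff.mpr (fun h => hne0 (by simp [h]))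
      have h1 : m.toSyn a ≤ m.toSyn dp := le_trans (Finset.le_sup ha) (le_of_eq hsupp)
      have h2 : m.toSyn b ≤ m.toSyn dq := le_trans (Finset.le_sup hb) (le_of_eq hsupq)
      have hab' : m.toSyn a + m.toSyn b = m.toSyn dp + m.toSyn dq := by
        rw [← map_add, ← map_add, hab]
      have ea : m.toSyn a = m.toSyn dp := by
        by_contra hne'
        exact absurd hab'
          (ne_of_lt (add_lt_add_of_lt_of_le (lt_of_le_of_ne h1 hne') h2))
      have eb : m.toSyn b = m.toSyn dq := by
        rw [ea] at hab'; exact add_left_cancel hab'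
      exact hne (Prod.ext (m.toSyn.injective ea) (m.toSyn.injective eb))
    have hne : coeff (dp + dq) (p * q) ≠ 0 := by
      rw [key]
      exact mul_ne_zero (mem_support_iff.mp hdp) (mem_support_iff.mp hdq)
    rw [← map_add]
    exact Finset.le_sup (mem_support_iff.mpr hne)

lemma mdeg_sub_le {p q : MvPolynomial σ ℚ} : mdeg m (p - q) ≤ mdeg m p ⊔ mdeg m q := by
  apply Finset.sup_le
  intro d hd
  rw [mem_support_iff, coeff_sub] at hd
  rcases ne_or_eq (coeff d p) 0 with h | h
  · exact le_trans (le_mdeg m h) le_sup_left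
  · have : coeff d q ≠ 0 := by intro h'; simp [h, h'] at hd
    exact le_trans (le_mdeg m this) le_sup_right

lemma mdeg_smul_le {c : ℚ} {p : MvPolynomial σ ℚ} : mdeg m (c • p) ≤ mdeg m p :=
  Finset.sup_mono (support_smul)


lemma linearIndependent_of_mdeg {ι : Type*} {f : ι → MvPolynomial σ ℚ}
    (h0 : ∀ i, f i ≠ 0) (hinj : Function.Injective fun i => mdeg m (f i)) :
    LinearIndependent ℚ f := by
  rw [linearIndependent_iff']
  intro s g hsum i hi
  by_contra hgi
  classical
  set T := s.filter (fun j => g j ≠ 0) with hT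
  have hTne : T.Nonempty := ⟨i, Finset.mem_filter.mpr ⟨hi, hgi⟩⟩
  obtain ⟨i0, hi0T, hmax⟩ := T.exists_max_image (fun j => mdeg m (f j)) hTne
  have hi0s : i0 ∈ s := (Finset.mem_filter.mp hi0T).1
  have hgi0 : g i0 ≠ 0 := (Finset.mem_filter.mp hi0T).2
  have hco := congrArg (coeff (m.toSyn.symm (mdeg m (f i0)))) hsum
  rw [coeff_sum, coeff_zero] at hco
  rw [Finset.sum_eq_single_of_mem i0 hi0s] at hco
  · rw [coeff_smul] at hco
    exact mul_ne_zero hgi0 (coeff_mdeg_ne_zero m (h0 i0)) (by simpa using hco)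
  · intro j hjs hji
    rw [coeff_smul]
    by_cases hgj : g j = 0
    · simp [hgj]
    · have hjT : j ∈ T := Finset.mem_filter.mpr ⟨hjs, hgj⟩
      have hlt : mdeg m (f j) < mdeg m (f i0) :=
        lt_of_le_of_ne (hmax j hjT) (fun h => hji (hinj h))
      rw [coeff_eq_zero_of_mdeg_lt m (by rwa [AddEquiv.apply_symm_apply]), smul_zero]

/-- Representatives span. -/
lemma le_span_reps (V : Submodule ℚ (MvPolynomial σ ℚ))
    (DS : Set m.syn) (hDS : ∀ p, p ∈ V → p ≠ 0 → mdeg m p ∈ DS)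
    (w : m.syn → MvPolynomial σ ℚ)
    (hw : ∀ δ ∈ DS, w δ ∈ V ∧ w δ ≠ 0 ∧ mdeg m (w δ) = δ) :
    V ≤ Submodule.span ℚ (w '' DS) := by
  intro p hp
  generalize hδ : mdeg m p = δ
  induction δ using WellFoundedLT.induction generalizing p with
  | _ δ IH =>
    by_cases hp0 : p = 0
    · simp [hp0]
    have hδDS : δ ∈ DS := hδ ▸ hDS p hp hp0
    obtain ⟨hwV, hw0, hwdeg⟩ := hw δ hδDS
    have hwspan : w δ ∈ Submodule.span ℚ (w '' DS) :=
      Submodule.subset_span ⟨δ, hδDS, rfl⟩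
    set c : ℚ := coeff (m.toSyn.symm δ) p / coeff (m.toSyn.symm δ) (w δ) with hc
    set r : MvPolynomial σ ℚ := p - c • w δ with hr
    have hrV : r ∈ V := sub_mem hp (Submodule.smul_mem V c hwV)
    have hwc : coeff (m.toSyn.symm δ) (w δ) ≠ 0 := by
      have h := coeff_mdeg_ne_zero m hw0
      rwa [hwdeg] at h
    have hrc : coeff (m.toSyn.symm δ) r = 0 := by
      rw [hr, coeff_sub, coeff_smul, hc, smul_eq_mul, div_mul_cancel₀ _ hwc, sub_self]
    have hpr : p = r + c • w δ := by rw [hr]; ring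
    by_cases hr0 : r = 0
    · rw [hpr, hr0, zero_add]
      exact Submodule.smul_mem _ c hwspan
    · have hrle : mdeg m r ≤ δ := by
        refine le_trans (mdeg_sub_le m) ?_
        rw [sup_le_iff]
        exact ⟨le_of_eq hδ, le_trans (mdeg_smul_le m) (le_of_eq hwdeg)⟩
      have hrlt : mdeg m r < δ := by
        rcases lt_or_eq_of_le hrle with h | h
        · exact h
        · exact absurd hrc (by rw [← h]; exact coeff_mdeg_ne_zero m hr0)
      rw [hpr]
      exact Submodule.add_mem _ (IH (mdeg m r) hrlt hrV rfl)
        (Submodule.smul_mem _ c hwspan)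


lemma card_le_finrank (V : Submodule ℚ (MvPolynomial σ ℚ)) [FiniteDimensional ℚ V]
    (F : Finset m.syn) (g : m.syn → MvPolynomial σ ℚ)
    (hg : ∀ c ∈ F, g c ∈ V ∧ g c ≠ 0 ∧ mdeg m (g c) = c) :
    F.card ≤ Module.finrank ℚ V := by
  have hli : LinearIndependent ℚ (fun c : F => g c.val) := by
    apply linearIndependent_of_mdeg m
    · exact fun c => (hg c.val c.2).2.1
    · intro c c' h
      simp only [(hg c.val c.2).2.2, (hg c'.val c'.2).2.2] at h
      exact Subtype.ext h
  let f : F → V := fun c => ⟨g c.val, (hg c.val c.2).1⟩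
  have hli' : LinearIndependent ℚ f := by
    have : V.subtype ∘ f = fun c : F => g c.val := rfl
    exact LinearIndependent.of_comp V.subtype (this ▸ hli)
  simpa [Fintype.card_coe] using hli'.fintype_card_le_finrank

lemma exists_degree_finset [DecidableEq σ] (V : Submodule ℚ (MvPolynomial σ ℚ))
    {t : ℕ} (ht : t ≤ Module.finrank ℚ V) :
    ∃ (F : Finset m.syn) (w : m.syn → MvPolynomial σ ℚ), F.card = t ∧
      ∀ δ ∈ F, w δ ∈ V ∧ w δ ≠ 0 ∧ mdeg m (w δ) = δ := by
  classical
  set DS : Set m.syn := {δ | ∃ p, p ∈ V ∧ p ≠ 0 ∧ mdeg m p = δ} with hDSdef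
  set w : m.syn → MvPolynomial σ ℚ := fun δ =>
    if h : ∃ p, p ∈ V ∧ p ≠ 0 ∧ mdeg m p = δ then h.choose else 0 with hwdef
  have hw : ∀ δ ∈ DS, w δ ∈ V ∧ w δ ≠ 0 ∧ mdeg m (w δ) = δ := by
    intro δ hδ
    have hδ' : ∃ p, p ∈ V ∧ p ≠ 0 ∧ mdeg m p = δ := hδ
    simp only [hwdef]
    rw [dif_pos hδ']
    exact hδ'.choose_spec
  suffices hsub : ∃ F : Finset m.syn, ↑F ⊆ DS ∧ F.card = t by
    obtain ⟨F, hFsub, hFcard⟩ := hsub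
    exact ⟨F, w, hFcard, fun δ hδ => hw δ (hFsub hδ)⟩
  by_cases hfin : DS.Finite
  · have hspan : V ≤ Submodule.span ℚ (w '' DS) :=
      le_span_reps m V DS (fun p hp hp0 => ⟨p, hp, hp0, rfl⟩) w hw
    have hfd : FiniteDimensional ℚ (Submodule.span ℚ (w '' DS)) :=
      FiniteDimensional.span_of_finite ℚ (hfin.image w)
    have h1 : Module.finrank ℚ V ≤ Module.finrank ℚ (Submodule.span ℚ (w '' DS)) :=
      Submodule.finrank_mono hspan
    have h2 : Module.finrank ℚ (Submodule.span ℚ (w '' DS)) ≤ hfin.toFinset.card := by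
      have himg : w '' DS = ↑(hfin.toFinset.image w) := by
        simp [Finset.coe_image, Set.Finite.coe_toFinset]
      rw [himg]
      exact le_trans (finrank_span_finset_le_card _) (Finset.card_image_le)
    have : t ≤ hfin.toFinset.card := le_trans ht (le_trans h1 h2)
    obtain ⟨F, hFsub, hFcard⟩ := Finset.exists_subset_card_eq this
    exact ⟨F, by rw [← Set.Finite.coe_toFinset hfin]; exact_mod_cast hFsub, hFcard⟩
  · have hinf : DS.Infinite := hfin
    obtain ⟨F, hFsub, hFcard⟩ := hinf.exists_subset_card_eq t
    exact ⟨F, hFsub, hFcard⟩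

end SemiInvProof


section Sfacts

lemma Dlin_apply (n : ℕ) (p : MvPolynomial (Fin (n + 1)) ℚ) :
    Dlin n p = ∑ i : Fin (n + 1), (i.val : ℚ) •
      (X (⟨i.val - 1, lt_of_le_of_lt (Nat.sub_le _ _) i.isLt⟩ : Fin (n + 1)) * pderiv i p) := by
  simp [Dlin, LinearMap.sum_apply, LinearMap.smul_apply, LinearMap.comp_apply,
    LinearMap.mulLeft_apply]

lemma Dlin_mul (n : ℕ) (p q : MvPolynomial (Fin (n + 1)) ℚ) :
    Dlin n (p * q) = p * Dlin n q + Dlin n p * q := by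
  simp only [Dlin_apply, pderiv_mul]
  rw [Finset.mul_sum, Finset.sum_mul, ← Finset.sum_add_distrib]
  apply Finset.sum_congr rfl
  intro i _
  simp only [smul_eq_C_mul]
  ring

lemma S_mul {n k₁ m₁ k₂ m₂ : ℕ} {p q : MvPolynomial (Fin (n + 1)) ℚ}
    (hp : p ∈ S n k₁ m₁) (hq : q ∈ S n k₂ m₂) : p * q ∈ S n (k₁ + k₂) (m₁ + m₂) := by
  obtain ⟨hp12, hp3⟩ := Submodule.mem_inf.mp hp
  obtain ⟨hp1, hp2⟩ := Submodule.mem_inf.mp hp12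
  obtain ⟨hq12, hq3⟩ := Submodule.mem_inf.mp hq
  obtain ⟨hq1, hq2⟩ := Submodule.mem_inf.mp hq12
  refine Submodule.mem_inf.mpr ⟨Submodule.mem_inf.mpr ⟨?_, ?_⟩, ?_⟩
  · exact (mem_homogeneousSubmodule _ _).mpr
      (((mem_homogeneousSubmodule _ _).mp hp1).mul
        ((mem_homogeneousSubmodule _ _).mp hq1))
  · exact (mem_weightedHomogeneousSubmodule _ _ _ _).mpr
      (((mem_weightedHomogeneousSubmodule _ _ _ _).mp hp2).mul
        ((mem_weightedHomogeneousSubmodule _ _ _ _).mp hq2))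
  · rw [LinearMap.mem_ker] at hp3 hq3 ⊢
    rw [Dlin_mul, hp3, hq3, mul_zero, zero_mul, add_zero]

lemma S_le_restrict (n k m : ℕ) : S n k m ≤ restrictTotalDegree (Fin (n + 1)) ℚ k := by
  intro p hp
  rw [mem_restrictTotalDegree]
  exact ((mem_homogeneousSubmodule _ _).mp hp.1.1).totalDegree_le

instance S_finiteDimensional (n k m : ℕ) : FiniteDimensional ℚ (S n k m) :=
  Submodule.finiteDimensional_of_le (S_le_restrict n k m)

end Sfacts

theorem dim_semiinvariants_product (n k₁ k₂ m₁ m₂ t₁ t₂ : ℕ)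
    (hm₁ : 2 * m₁ ≤ n * k₁) (hm₂ : 2 * m₂ ≤ n * k₂)
    (ht₁ : 1 ≤ t₁) (ht₂ : 1 ≤ t₂)
    (hd₁ : Module.finrank ℚ (S n k₁ m₁) = t₁)
    (hd₂ : Module.finrank ℚ (S n k₂ m₂) = t₂) :
    t₁ + t₂ - 1 ≤ Module.finrank ℚ (S n (k₁ + k₂) (m₁ + m₂)) := by
  classical
  set mo : MonomialOrder (Fin (n + 1)) := MonomialOrder.lex with hmo
  obtain ⟨A, w₁, hAcard, hw₁⟩ :=
    SemiInvProof.exists_degree_finset mo (S n k₁ m₁) (le_of_eq hd₁.symm)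
  obtain ⟨B, w₂, hBcard, hw₂⟩ :=
    SemiInvProof.exists_degree_finset mo (S n k₂ m₂) (le_of_eq hd₂.symm)
  have hAne : A.Nonempty := Finset.card_pos.mp (by omega)
  have hBne : B.Nonempty := Finset.card_pos.mp (by omega)
  set α := A.min' hAne with hα
  set β := B.max' hBne with hβ
  have hαA : α ∈ A := A.min'_mem hAne
  have hβB : β ∈ B := B.max'_mem hBne
  set C : Finset mo.syn := A.image (· + β) ∪ B.image (α + ·) with hC
  set g : mo.syn → MvPolynomial (Fin (n + 1)) ℚ := fun c =>
    if h : ∃ a ∈ A, a + β = c then w₁ h.choose * w₂ β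
    else if h' : ∃ b ∈ B, α + b = c then w₁ α * w₂ h'.choose else 0 with hg
  have hgood : ∀ c ∈ C, g c ∈ S n (k₁ + k₂) (m₁ + m₂) ∧ g c ≠ 0 ∧
      SemiInvProof.mdeg mo (g c) = c := by
    intro c hc
    by_cases h : ∃ a ∈ A, a + β = c
    · obtain ⟨haA, hac⟩ := h.choose_spec
      have hwa := hw₁ _ haA
      have hwb := hw₂ _ hβB
      have hgc : g c = w₁ h.choose * w₂ β := by simp only [hg]; rw [dif_pos h]
      rw [hgc]
      refine ⟨S_mul hwa.1 hwb.1, mul_ne_zero hwa.2.1 hwb.2.1, ?_⟩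
      rw [SemiInvProof.mdeg_mul mo hwa.2.1 hwb.2.1, hwa.2.2, hwb.2.2, hac]
    · have h' : ∃ b ∈ B, α + b = c := by
        rcases Finset.mem_union.mp hc with hc1 | hc2
        · obtain ⟨a, haA, hac⟩ := Finset.mem_image.mp hc1
          exact absurd ⟨a, haA, hac⟩ h
        · obtain ⟨b, hbB, hbc⟩ := Finset.mem_image.mp hc2
          exact ⟨b, hbB, hbc⟩
      obtain ⟨hbB, hbc⟩ := h'.choose_spec
      have hwa := hw₁ _ hαA
      have hwb := hw₂ _ hbB
      have hgc : g c = w₁ α * w₂ h'.choose := by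
        simp only [hg]; rw [dif_neg h, dif_pos h']
      rw [hgc]
      refine ⟨S_mul hwa.1 hwb.1, mul_ne_zero hwa.2.1 hwb.2.1, ?_⟩
      rw [SemiInvProof.mdeg_mul mo hwa.2.1 hwb.2.1, hwa.2.2, hwb.2.2, hbc]
  have hcard : C.card = t₁ + t₂ - 1 := by
    have hinj1 : (A.image (· + β)).card = t₁ := by
      rw [Finset.card_image_of_injective _ (add_left_injective β), hAcard]
    have hinj2 : (B.image (α + ·)).card = t₂ := by
      rw [Finset.card_image_of_injective _ (add_right_injective α), hBcard]
    have hint : (A.image (· + β)) ∩ (B.image (α + ·)) = {α + β} := by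
      ext c
      simp only [Finset.mem_inter, Finset.mem_image, Finset.mem_singleton]
      constructor
      · rintro ⟨⟨a, haA, rfl⟩, ⟨b, hbB, hbc⟩⟩
        have h1 : α + β ≤ a + β := add_le_add_left (A.min'_le a haA) β
        have h2 : α + b ≤ α + β := add_le_add_right (B.le_max' b hbB) α
        rw [hbc] at h2
        exact le_antisymm h2 h1
      · rintro rfl
        exact ⟨⟨α, hαA, rfl⟩, ⟨β, hβB, rfl⟩⟩
    have hcui := Finset.card_union_add_card_inter (A.image (· + β)) (B.image (α + ·))
    rw [hint, hinj1, hinj2, Finset.card_singleton] at hcui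
    rw [hC]
    omega
  calc t₁ + t₂ - 1 = C.card := hcard.symm
    _ ≤ Module.finrank ℚ (S n (k₁ + k₂) (m₁ + m₂)) :=
      SemiInvProof.card_le_finrank mo _ C g hgood
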